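/- Let C and D be closed model categories and (S, U): C → D a Quillen equivalence. Suppose in addition that the terminal object * of C is cofibrant and that S preserves the terminal object (the canonical map S(*) → * is an isomorphism). Then the induced Quillen adjunction (S_*, U_*): C_* → D_* between the pointed model categories C_* = (*↓C) and D_* = (*↓D) is a Quillen equivalence. -/

import Mathlib

open CategoryTheory CategoryTheory.Limits

universe v u v' u'

/-- `f` is a retract of `g` in the arrow category. -/
def IsRetractOfArrow {C : Type u} [Category.{v} C] {A B A' B' : C}
    (f : A ⟶ B) (g : A' ⟶ B') : Prop :=
  ∃ (i : Arrow.mk f ⟶ Arrow.mk g) (r : Arrow.mk g ⟶ Arrow.mk f), i ≫ r = 𝟙 (Arrow.mk f)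

/-- A (closed) model structure on a category `C`, in the sense of Quillen: three classes of
morphisms (cofibrations, fibrations, weak equivalences) satisfying the two-out-of-three
axiom, closure under retracts, the lifting axioms and the factorization axioms. -/
structure ModelStruct (C : Type u) [Category.{v} C] : Type (max u v) where
  cof : MorphismProperty C
  fib : MorphismProperty C
  weq : MorphismProperty C
  weq_comp : ∀ {X Y Z : C} (f : X ⟶ Y) (g : Y ⟶ Z), weq f → weq g → weq (f ≫ g)
  weq_cancel_left : ∀ {X Y Z : C} (f : X ⟶ Y) (g : Y ⟶ Z), weq f → weq (f ≫ g) → weq g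
  weq_cancel_right : ∀ {X Y Z : C} (f : X ⟶ Y) (g : Y ⟶ Z), weq g → weq (f ≫ g) → weq f
  cof_retract : ∀ {A B A' B' : C} {f : A ⟶ B} {g : A' ⟶ B'},
    IsRetractOfArrow f g → cof g → cof f
  fib_retract : ∀ {A B A' B' : C} {f : A ⟶ B} {g : A' ⟶ B'},
    IsRetractOfArrow f g → fib g → fib f
  weq_retract : ∀ {A B A' B' : C} {f : A ⟶ B} {g : A' ⟶ B'},
    IsRetractOfArrow f g → weq g → weq f
  lifting_cof_trivFib : ∀ {A B X Y : C} (i : A ⟶ B) (p : X ⟶ Y),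
    cof i → fib p → weq p → HasLiftingProperty i p
  lifting_trivCof_fib : ∀ {A B X Y : C} (i : A ⟶ B) (p : X ⟶ Y),
    cof i → weq i → fib p → HasLiftingProperty i p
  factor_cof_trivFib : ∀ {X Y : C} (f : X ⟶ Y),
    ∃ (Z : C) (i : X ⟶ Z) (p : Z ⟶ Y), cof i ∧ fib p ∧ weq p ∧ i ≫ p = f
  factor_trivCof_fib : ∀ {X Y : C} (f : X ⟶ Y),
    ∃ (Z : C) (i : X ⟶ Z) (p : Z ⟶ Y), cof i ∧ weq i ∧ fib p ∧ i ≫ p = f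

variable {C : Type u} [Category.{v} C]

/-- An object is cofibrant if the unique map from the initial object to it is a cofibration. -/
def ModelStruct.Cofibrant [HasInitial C] (M : ModelStruct C) (A : C) : Prop :=
  M.cof (initial.to A)

/-- An object is fibrant if the unique map from it to the terminal object is a fibration. -/
def ModelStruct.Fibrant [HasTerminal C] (M : ModelStruct C) (A : C) : Prop :=
  M.fib (terminal.from A)

/-- The induced model structure on the coslice category `(X ↓ C)`: a morphism is a
cofibration, fibration or weak equivalence iff its underlying morphism in `C` is one. -/
def ModelStruct.under (M : ModelStruct C) (X : C) : ModelStruct (Under X) where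
  cof _ _ f := M.cof f.right
  fib _ _ f := M.fib f.right
  weq _ _ f := M.weq f.right
  weq_comp f g hf hg := by simpa using M.weq_comp f.right g.right hf hg
  weq_cancel_left f g hf hfg := M.weq_cancel_left f.right g.right hf (by simpa using hfg)
  weq_cancel_right f g hg hfg := M.weq_cancel_right f.right g.right hg (by simpa using hfg)
  cof_retract := fun ⟨i, r, hir⟩ hg => M.cof_retract
    ⟨(Under.forget X).mapArrow.map i, (Under.forget X).mapArrow.map r,
      by exact (CategoryTheory.Functor.map_comp _ i r).symm.trans
          ((congrArg (Under.forget X).mapArrow.map hir).trans (CategoryTheory.Functor.map_id _ _))⟩ hg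
  fib_retract := fun ⟨i, r, hir⟩ hg => M.fib_retract
    ⟨(Under.forget X).mapArrow.map i, (Under.forget X).mapArrow.map r,
      by exact (CategoryTheory.Functor.map_comp _ i r).symm.trans
          ((congrArg (Under.forget X).mapArrow.map hir).trans (CategoryTheory.Functor.map_id _ _))⟩ hg
  weq_retract := fun ⟨i, r, hir⟩ hg => M.weq_retract
    ⟨(Under.forget X).mapArrow.map i, (Under.forget X).mapArrow.map r,
      by exact (CategoryTheory.Functor.map_comp _ i r).symm.trans
          ((congrArg (Under.forget X).mapArrow.map hir).trans (CategoryTheory.Functor.map_id _ _))⟩ hg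
  lifting_cof_trivFib i p hi hp hp' := by
    constructor
    intro f g sq
    haveI := M.lifting_cof_trivFib i.right p.right hi hp hp'
    have sq' : CommSq f.right i.right p.right g.right :=
      ⟨by rw [← Under.comp_right, sq.w, Under.comp_right]⟩
    exact ⟨⟨⟨Under.homMk sq'.lift (by
        rw [← Under.w i, Category.assoc, sq'.fac_left, Under.w f]),
      by ext; exact sq'.fac_left, by ext; exact sq'.fac_right⟩⟩⟩
  lifting_trivCof_fib i p hi hi' hp := by
    constructor
    intro f g sq
    haveI := M.lifting_trivCof_fib i.right p.right hi hi' hp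
    have sq' : CommSq f.right i.right p.right g.right :=
      ⟨by rw [← Under.comp_right, sq.w, Under.comp_right]⟩
    exact ⟨⟨⟨Under.homMk sq'.lift (by
        rw [← Under.w i, Category.assoc, sq'.fac_left, Under.w f]),
      by ext; exact sq'.fac_left, by ext; exact sq'.fac_right⟩⟩⟩
  factor_cof_trivFib {A B} f := by
    obtain ⟨Z, i, p, hi, hp, hp', hfac⟩ := M.factor_cof_trivFib f.right
    exact ⟨Under.mk (A.hom ≫ i), Under.homMk i rfl,
      Under.homMk p (by show (A.hom ≫ i) ≫ p = B.hom; rw [Category.assoc, hfac, Under.w f]),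
      hi, hp, hp', by ext; exact hfac⟩
  factor_trivCof_fib {A B} f := by
    obtain ⟨Z, i, p, hi, hi', hp, hfac⟩ := M.factor_trivCof_fib f.right
    exact ⟨Under.mk (A.hom ≫ i), Under.homMk i rfl,
      Under.homMk p (by show (A.hom ≫ i) ≫ p = B.hom; rw [Category.assoc, hfac, Under.w f]),
      hi, hi', hp, by ext; exact hfac⟩

/-- The induced model structure on the slice category `(C ↓ X)`: a morphism is a
cofibration, fibration or weak equivalence iff its underlying morphism in `C` is one. -/
def ModelStruct.over (M : ModelStruct C) (X : C) : ModelStruct (Over X) where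
  cof _ _ f := M.cof f.left
  fib _ _ f := M.fib f.left
  weq _ _ f := M.weq f.left
  weq_comp f g hf hg := by simpa using M.weq_comp f.left g.left hf hg
  weq_cancel_left f g hf hfg := M.weq_cancel_left f.left g.left hf (by simpa using hfg)
  weq_cancel_right f g hg hfg := M.weq_cancel_right f.left g.left hg (by simpa using hfg)
  cof_retract := fun ⟨i, r, hir⟩ hg => M.cof_retract
    ⟨(Over.forget X).mapArrow.map i, (Over.forget X).mapArrow.map r,
      by exact (CategoryTheory.Functor.map_comp _ i r).symm.trans
          ((congrArg (Over.forget X).mapArrow.map hir).trans (CategoryTheory.Functor.map_id _ _))⟩ hg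
  fib_retract := fun ⟨i, r, hir⟩ hg => M.fib_retract
    ⟨(Over.forget X).mapArrow.map i, (Over.forget X).mapArrow.map r,
      by exact (CategoryTheory.Functor.map_comp _ i r).symm.trans
          ((congrArg (Over.forget X).mapArrow.map hir).trans (CategoryTheory.Functor.map_id _ _))⟩ hg
  weq_retract := fun ⟨i, r, hir⟩ hg => M.weq_retract
    ⟨(Over.forget X).mapArrow.map i, (Over.forget X).mapArrow.map r,
      by exact (CategoryTheory.Functor.map_comp _ i r).symm.trans
          ((congrArg (Over.forget X).mapArrow.map hir).trans (CategoryTheory.Functor.map_id _ _))⟩ hg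
  lifting_cof_trivFib i p hi hp hp' := by
    constructor
    intro f g sq
    haveI := M.lifting_cof_trivFib i.left p.left hi hp hp'
    have sq' : CommSq f.left i.left p.left g.left :=
      ⟨by rw [← Over.comp_left, sq.w, Over.comp_left]⟩
    exact ⟨⟨⟨Over.homMk sq'.lift (by
        rw [← Over.w p, ← Category.assoc, sq'.fac_right, Over.w g]),
      by ext; exact sq'.fac_left, by ext; exact sq'.fac_right⟩⟩⟩
  lifting_trivCof_fib i p hi hi' hp := by
    constructor
    intro f g sq
    haveI := M.lifting_trivCof_fib i.left p.left hi hi' hp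
    have sq' : CommSq f.left i.left p.left g.left :=
      ⟨by rw [← Over.comp_left, sq.w, Over.comp_left]⟩
    exact ⟨⟨⟨Over.homMk sq'.lift (by
        rw [← Over.w p, ← Category.assoc, sq'.fac_right, Over.w g]),
      by ext; exact sq'.fac_left, by ext; exact sq'.fac_right⟩⟩⟩
  factor_cof_trivFib {A B} f := by
    obtain ⟨Z, i, p, hi, hp, hp', hfac⟩ := M.factor_cof_trivFib f.left
    exact ⟨Over.mk (p ≫ B.hom), Over.homMk i (by show i ≫ p ≫ B.hom = A.hom; rw [← Category.assoc, hfac, Over.w f]),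
      Over.homMk p rfl, hi, hp, hp', by ext; exact hfac⟩
  factor_trivCof_fib {A B} f := by
    obtain ⟨Z, i, p, hi, hi', hp, hfac⟩ := M.factor_trivCof_fib f.left
    exact ⟨Over.mk (p ≫ B.hom), Over.homMk i (by show i ≫ p ≫ B.hom = A.hom; rw [← Category.assoc, hfac, Over.w f]),
      Over.homMk p rfl, hi, hi', hp, by ext; exact hfac⟩

noncomputable instance (X : C) : HasInitial (Under X) :=
  Under.mkIdInitial.hasInitial

noncomputable instance (X : C) : HasTerminal (Over X) :=
  Over.mkIdTerminal.hasTerminal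

/-- The terminal object of `(X ↓ C)` is `X ⟶ *`. -/
noncomputable def underMkTerminal [HasTerminal C] (X : C) :
    IsTerminal (Under.mk (terminal.from X)) :=
  IsTerminal.ofUniqueHom (fun u => Under.homMk (terminal.from u.right)
      (terminal.hom_ext _ _))
    (fun u m => by ext; exact terminal.hom_ext _ _)

noncomputable instance [HasTerminal C] (X : C) : HasTerminal (Under X) :=
  (underMkTerminal X).hasTerminal

/-- The initial object of `(C ↓ X)` is `∅ ⟶ X`. -/
noncomputable def overMkInitial [HasInitial C] (X : C) :
    IsInitial (Over.mk (initial.to X)) :=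
  IsInitial.ofUniqueHom (fun u => Over.homMk (initial.to u.left)
      (initial.hom_ext _ _))
    (fun u m => by ext; exact initial.hom_ext _ _)

noncomputable instance [HasInitial C] (X : C) : HasInitial (Over X) :=
  (overMkInitial X).hasInitial

/-- A Quillen adjunction between model categories: an adjoint pair whose left adjoint
preserves cofibrations and acyclic cofibrations. -/
structure QuillenAdjunction {C : Type u} [Category.{v} C] {D : Type u'} [Category.{v'} D]
    (M : ModelStruct C) (N : ModelStruct D) (F : C ⥤ D) (G : D ⥤ C) where
  adj : F ⊣ G
  map_cof : ∀ {A B : C} (f : A ⟶ B), M.cof f → N.cof (F.map f)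
  map_trivCof_weq : ∀ {A B : C} (f : A ⟶ B), M.cof f → M.weq f → N.weq (F.map f)

/-- A Quillen adjunction is a Quillen equivalence if for every cofibrant `A` and fibrant `B`,
a map `F A ⟶ B` is a weak equivalence iff its adjunct `A ⟶ G B` is. -/
def IsQuillenEquivalence {C : Type u} [Category.{v} C] {D : Type u'} [Category.{v'} D]
    [HasInitial C] [HasTerminal D]
    (M : ModelStruct C) (N : ModelStruct D) {F : C ⥤ D} {G : D ⥤ C} (adj : F ⊣ G) : Prop :=
  ∀ (A : C) (B : D), M.Cofibrant A → N.Fibrant B →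
    ∀ f : F.obj A ⟶ B, N.weq f ↔ M.weq ((adj.homEquiv A B) f)



section AuxPointed

lemma isRetractOfArrow_conj {A A' B B' : C} (f : A ⟶ B) (a : A' ≅ A) (b : B ≅ B') :
    IsRetractOfArrow (a.hom ≫ f ≫ b.hom) f :=
  ⟨Arrow.homMk (u := a.hom) (v := b.inv) (by simp),
   Arrow.homMk (u := a.inv) (v := b.hom) (by simp), by ext <;> simp⟩

lemma ModelStruct.cof_comp (M : ModelStruct C) {X Y Z : C} (f : X ⟶ Y) (g : Y ⟶ Z)
    (hf : M.cof f) (hg : M.cof g) : M.cof (f ≫ g) := by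
  obtain ⟨W, i, p, hi, hp, hp', hfac⟩ := M.factor_cof_trivFib (f ≫ g)
  haveI := M.lifting_cof_trivFib f p hf hp hp'
  haveI := M.lifting_cof_trivFib g p hg hp hp'
  have sq : CommSq i (f ≫ g) p (𝟙 Z) := ⟨by simp [hfac]⟩
  exact M.cof_retract
    ⟨Arrow.homMk (u := 𝟙 X) (v := sq.lift) (by simp [sq.fac_left]),
     Arrow.homMk (u := 𝟙 X) (v := p) (by simp [hfac]),
     by ext <;> simp [sq.fac_right]⟩ hi

lemma ModelStruct.cof_hom_of_under_cofibrant (M : ModelStruct C) {X : C}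
    [HasInitial (Under X)] {A : Under X} (h : (M.under X).Cofibrant A) : M.cof A.hom := by
  have h' : M.cof ((initial.to A).right) := h
  have e : (⊥_ (Under X)) ≅ Under.mk (𝟙 X) := initialIsoIsInitial Under.mkIdInitial
  haveI : IsIso e.hom.right := inferInstanceAs (IsIso ((Under.forget X).map e.hom))
  have h1 : (⊥_ (Under X)).hom ≫ e.hom.right = 𝟙 X := by simpa using Under.w e.hom
  have h2 : e.inv.right = (⊥_ (Under X)).hom := by simpa using Under.w e.inv
  haveI : IsIso (⊥_ (Under X)).hom :=
    ⟨e.hom.right, h1, by rw [← h2, ← Under.comp_right, Iso.hom_inv_id]; rfl⟩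
  have hr := isRetractOfArrow_conj (initial.to A).right
    (asIso (⊥_ (Under X)).hom) (Iso.refl _)
  simp only [asIso_hom, Iso.refl_hom, Category.comp_id, Under.w] at hr
  exact M.cof_retract hr h'

lemma ModelStruct.fibrant_right_of_under_fibrant [HasTerminal C] (N : ModelStruct C)
    [HasTerminal (Under (⊤_ C))] {B : Under (⊤_ C)} (h : (N.under (⊤_ C)).Fibrant B) :
    N.Fibrant B.right := by
  have h' : N.fib ((terminal.from B).right) := h
  have e : (⊤_ (Under (⊤_ C))) ≅ Under.mk (terminal.from (⊤_ C)) :=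
    terminalIsoIsTerminal (underMkTerminal (⊤_ C))
  haveI : IsIso e.hom.right := inferInstanceAs (IsIso ((Under.forget _).map e.hom))
  have hB : terminal.from B.right = (terminal.from B).right ≫ e.hom.right :=
    terminal.hom_ext _ _
  have hr := isRetractOfArrow_conj (terminal.from B).right (Iso.refl _) (asIso e.hom.right)
  simp only [Iso.refl_hom, Category.id_comp, asIso_hom] at hr
  unfold ModelStruct.Fibrant
  rw [hB]
  exact N.fib_retract hr h'

variable {D : Type u'} [Category.{v'} D]

/-- The core hom-equivalence for the composite pointed adjunction. -/
noncomputable def pointedCore [HasTerminal C] [HasTerminal D] [HasPushouts D]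
    {S : C ⥤ D} {U : D ⥤ C} (adj : S ⊣ U) :
    Adjunction.CoreHomEquiv
      (Under.post S ⋙ Under.pushout (terminal.from (S.obj (⊤_ C))))
      (Under.map (terminal.from (S.obj (⊤_ C))) ⋙
        (Under.post U ⋙ Under.map (adj.unit.app (⊤_ C)))) where
  homEquiv A B :=
    { toFun := fun f => Under.homMk (adj.homEquiv A.right B.right
        (pushout.inl (S.map A.hom) (terminal.from (S.obj (⊤_ C))) ≫ f.right)) (by
          have hw : pushout.inr (S.map A.hom) (terminal.from (S.obj (⊤_ C))) ≫ f.right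
              = B.hom := Under.w f
          have key : S.map A.hom ≫
              pushout.inl (S.map A.hom) (terminal.from (S.obj (⊤_ C))) ≫ f.right
              = terminal.from (S.obj (⊤_ C)) ≫ B.hom := by
            erw [← Category.assoc, pushout.condition, Category.assoc, hw]
          have nat : A.hom ≫ adj.unit.app A.right
              = adj.unit.app (⊤_ C) ≫ U.map (S.map A.hom) := by
            simpa using adj.unit.naturality A.hom
          dsimp
          erw [Adjunction.homEquiv_unit, ← Category.assoc, nat,
            Category.assoc, ← U.map_comp, key]; rfl)
      invFun := fun h => Under.homMk (pushout.desc ((adj.homEquiv A.right B.right).symm h.right)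
          B.hom (by
            have hw : A.hom ≫ h.right
                = adj.unit.app (⊤_ C) ≫ U.map (terminal.from (S.obj (⊤_ C)) ≫ B.hom) :=
              Under.w h
            show S.map A.hom ≫ (adj.homEquiv A.right B.right).symm h.right = _
            apply (adj.homEquiv (⊤_ C) B.right).injective
            erw [adj.homEquiv_naturality_left, Equiv.apply_symm_apply, Adjunction.homEquiv_unit]
            exact hw))
          (by exact pushout.inr_desc _ _ _)
      left_inv := fun f => by
        ext
        dsimp
        apply pushout.hom_ext
        · exact (pushout.inl_desc _ _ _).trans ((adj.homEquiv _ _).symm_apply_apply _)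
        · exact (pushout.inr_desc _ _ _).trans (Under.w f).symm
      right_inv := fun h => by
        ext
        dsimp
        exact (congrArg (adj.homEquiv A.right B.right) (pushout.inl_desc _ _ _)).trans
          ((adj.homEquiv _ _).apply_symm_apply _) }
  homEquiv_naturality_left_symm := fun {A' A B} m h => by
    ext
    dsimp
    apply pushout.hom_ext
    · exact (pushout.inl_desc _ _ _).trans ((adj.homEquiv_naturality_left_symm _ _).trans
        ((congrArg (S.map m.right ≫ ·) (pushout.inl_desc _ _ _).symm).trans
          ((Category.assoc _ _ _).symm.trans (pushout.inl_desc_assoc _ _ _ _).symm)))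
    · exact (pushout.inr_desc _ _ _).trans ((pushout.inr_desc _ _ _).symm.trans
        (pushout.inr_desc_assoc _ _ _ _).symm)
  homEquiv_naturality_right := fun {A B B'} f k => by
    ext
    dsimp
    exact (congrArg (adj.homEquiv A.right B'.right) (Category.assoc _ _ _).symm).trans
      (adj.homEquiv_naturality_right _ _)

end AuxPointed

/-- **Statement 13.** Suppose `(S, U) : C → D` is a Quillen equivalence, the terminal object `*`
of `C` is cofibrant, and `S` preserves the terminal object (the canonical map `S (*) ⟶ *` is an
isomorphism). Then the induced Quillen adjunction `(S_*, U_*) : C_* → D_*` between the pointed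
model categories is a Quillen equivalence. -/
theorem pointed_quillen_equivalence {C : Type u} [Category.{v} C]
    {D : Type u'} [Category.{v'} D]
    [HasLimits C] [HasColimits C] [HasLimits D] [HasColimits D]
    (M : ModelStruct C) (N : ModelStruct D) {S : C ⥤ D} {U : D ⥤ C}
    (Q : QuillenAdjunction M N S U) (hQ : IsQuillenEquivalence M N Q.adj)
    (hcof : M.Cofibrant (⊤_ C)) (hterm : IsIso (terminal.from (S.obj (⊤_ C)))) :
    ∃ QA : QuillenAdjunction (M.under (⊤_ C)) (N.under (⊤_ D))
        (Under.post S ⋙ Under.pushout (terminal.from (S.obj (⊤_ C))))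
        (Under.map (terminal.from (S.obj (⊤_ C))) ⋙
          (Under.post U ⋙ Under.map (Q.adj.unit.app (⊤_ C)))),
      IsQuillenEquivalence (M.under (⊤_ C)) (N.under (⊤_ D)) QA.adj := by
  haveI := hterm
  have hmapr : ∀ {A A' : Under (⊤_ C)} (m : A ⟶ A'),
      pushout.inl (S.map A.hom) (terminal.from (S.obj (⊤_ C))) ≫
        ((Under.post S ⋙ Under.pushout (terminal.from (S.obj (⊤_ C)))).map m).right
      = S.map m.right ≫ pushout.inl (S.map A'.hom) (terminal.from (S.obj (⊤_ C))) := by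
    intro A A' m
    dsimp
    exact pushout.inl_desc _ _ _
  have hconj : ∀ {A A' : Under (⊤_ C)} (m : A ⟶ A'),
      IsRetractOfArrow
        (((Under.post S ⋙ Under.pushout (terminal.from (S.obj (⊤_ C)))).map m).right)
        (S.map m.right) := by
    intro A A' m
    have hr := isRetractOfArrow_conj (S.map m.right)
      (asIso (pushout.inl (S.map A.hom) (terminal.from (S.obj (⊤_ C))))).symm
      (asIso (pushout.inl (S.map A'.hom) (terminal.from (S.obj (⊤_ C)))))
    have he : (asIso (pushout.inl (S.map A.hom) (terminal.from (S.obj (⊤_ C))))).symm.hom ≫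
        S.map m.right ≫
        (asIso (pushout.inl (S.map A'.hom) (terminal.from (S.obj (⊤_ C))))).hom
        = ((Under.post S ⋙ Under.pushout (terminal.from (S.obj (⊤_ C)))).map m).right := by
      rw [Iso.symm_hom, asIso_inv, asIso_hom]
      exact (IsIso.inv_comp_eq _).2 (hmapr m).symm
    rwa [he] at hr
  refine ⟨⟨Adjunction.mkOfHomEquiv (pointedCore Q.adj), ?_, ?_⟩, ?_⟩
  · intro A A' m hm
    exact N.cof_retract (hconj m) (Q.map_cof m.right hm)
  · intro A A' m hm hm'
    exact N.weq_retract (hconj m) (Q.map_trivCof_weq m.right hm hm')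
  · intro A B hA hB f
    have hAhom : M.cof A.hom := M.cof_hom_of_under_cofibrant hA
    have hAr : M.Cofibrant A.right := by
      unfold ModelStruct.Cofibrant
      rw [show initial.to A.right = initial.to (⊤_ C) ≫ A.hom from initial.hom_ext _ _]
      exact M.cof_comp _ _ hcof hAhom
    have hBr : N.Fibrant B.right := N.fibrant_right_of_under_fibrant hB
    have key := hQ A.right B.right hAr hBr
      (pushout.inl (S.map A.hom) (terminal.from (S.obj (⊤_ C))) ≫ f.right)
    have h1 : N.weq f.right ↔
        N.weq (pushout.inl (S.map A.hom) (terminal.from (S.obj (⊤_ C))) ≫ f.right) := by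
      constructor
      · intro hw
        have hr := isRetractOfArrow_conj (A := pushout (S.map A.hom) (terminal.from (S.obj (⊤_ C)))) f.right
          (asIso (pushout.inl (S.map A.hom) (terminal.from (S.obj (⊤_ C))))) (Iso.refl _)
        simp only [asIso_hom, Iso.refl_hom, Category.comp_id] at hr
        erw [Category.comp_id] at hr
        exact N.weq_retract hr hw
      · intro hw
        have hr := isRetractOfArrow_conj (A' := pushout (S.map A.hom) (terminal.from (S.obj (⊤_ C))))
          (pushout.inl (S.map A.hom) (terminal.from (S.obj (⊤_ C))) ≫ f.right)
          (asIso (pushout.inl (S.map A.hom) (terminal.from (S.obj (⊤_ C))))).symm (Iso.refl _)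
        simp only [Iso.symm_hom, asIso_inv, Iso.refl_hom, Category.comp_id,
          IsIso.inv_hom_id_assoc] at hr
        erw [IsIso.inv_hom_id_assoc] at hr
        exact N.weq_retract hr hw
    have hadj : (((Adjunction.mkOfHomEquiv (pointedCore Q.adj)).homEquiv A B) f).right
        = Q.adj.homEquiv A.right B.right
          (pushout.inl (S.map A.hom) (terminal.from (S.obj (⊤_ C))) ≫ f.right) := by
      rw [Adjunction.mkOfHomEquiv_homEquiv]
      rfl
    show N.weq f.right ↔ M.weq _
    rw [hadj]
    exact h1.trans key
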